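/- arXiv:math/0703459 — 4 statements merged into one kernel-verified Lean document; each statement's English description precedes it below -/
import Mathlib

section
/- If Δ is an odd-cycle-free facet complex, then Δ satisfies the Helly property: every family of pairwise intersecting facets of Δ has nonempty total intersection. -/
variable {V : Type*} [DecidableEq V] [Fintype V]

/-- A facet complex: a finite set of subsets of the vertex set, none contained in another. -/
def IsFacetComplex (Δ : Finset (Finset V)) : Prop :=
  ∀ F ∈ Δ, ∀ G ∈ Δ, F ⊆ G → F = G

/-- `F` is a leaf of `Δ`. -/
def IsLeaf (Δ : Finset (Finset V)) (F : Finset V) : Prop :=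
  F ∈ Δ ∧ (Δ = {F} ∨ ∃ G ∈ Δ.erase F, ∀ H ∈ Δ.erase F, H ∩ F ⊆ G)

/-- A forest: every nonempty subset has a leaf. -/
def IsForest (Δ : Finset (Finset V)) : Prop :=
  ∀ Γ ⊆ Δ, Γ.Nonempty → ∃ F, IsLeaf Γ F

/-- A simplicial cycle: no leaf, but every nonempty proper subset has a leaf. -/
def IsCycle (Δ : Finset (Finset V)) : Prop :=
  Δ.Nonempty ∧ (¬ ∃ F, IsLeaf Δ F) ∧ ∀ Γ ⊂ Δ, Γ.Nonempty → ∃ F, IsLeaf Γ F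

/-- Strong neighbors in `Δ`. -/
def StrongNeighbor (Δ : Finset (Finset V)) (F G : Finset V) : Prop :=
  F ≠ G ∧ ∀ H ∈ Δ, F ∩ G ⊆ H → H = F ∨ H = G

/-- Odd-cycle-free: no subset of odd cardinality is a cycle. -/
def OddCycleFree (Δ : Finset (Finset V)) : Prop :=
  ∀ Γ ⊆ Δ, Odd Γ.card → ¬ IsCycle Γ

/-- Sizes of vertex covers of `Δ`. -/
def CoverSizes (Δ : Finset (Finset V)) : Set ℕ :=
  {n | ∃ A : Finset V, (∀ F ∈ Δ, ∃ x ∈ A, x ∈ F) ∧ A.card = n}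

/-- Sizes of independent sets of facets of `Δ`. -/
def IndepSizes (Δ : Finset (Finset V)) : Set ℕ :=
  {n | ∃ B ⊆ Δ, (∀ F ∈ B, ∀ G ∈ B, F ≠ G → F ∩ G = ∅) ∧ B.card = n}

/-- The line graph of a facet complex. -/
def lineGraph (Δ : Finset (Finset V)) : SimpleGraph {F // F ∈ Δ} where
  Adj F G := F ≠ G ∧ (F.1 ∩ G.1).Nonempty
  symm := ⟨fun _ _ h => ⟨h.1.symm, by rw [Finset.inter_comm]; exact h.2⟩⟩
  loopless := ⟨fun _ h => h.1 rfl⟩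

/-- The cycle graph of length `n` on `ZMod n`. -/
def cycleGraph (n : ℕ) : SimpleGraph (ZMod n) where
  Adj i j := i ≠ j ∧ (j = i + 1 ∨ i = j + 1)
  symm := ⟨fun _ _ h => ⟨h.1.symm, h.2.symm⟩⟩
  loopless := ⟨fun _ h => h.1 rfl⟩

/-- A special hyper-cycle of length `ℓ` in `Δ`. -/
def IsSpecialCycle (Δ : Finset (Finset V)) (ℓ : ℕ) : Prop :=
  ∃ (x : ZMod ℓ → V) (F : ZMod ℓ → Finset V),
    Function.Injective x ∧ Function.Injective F ∧ (∀ i, F i ∈ Δ) ∧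
    ∀ i j, x i ∈ F j ↔ (j = i - 1 ∨ j = i)

/-- Balanced: no special hyper-cycle of odd length. -/
def IsBalanced (Δ : Finset (Finset V)) : Prop :=
  ∀ ℓ, 3 ≤ ℓ → Odd ℓ → ¬ IsSpecialCycle Δ ℓ

/-- Any facet complex with at most two facets has a leaf. -/
lemma small_has_leaf (Γ : Finset (Finset V)) (h1 : Γ.Nonempty) (h2 : Γ.card ≤ 2) :
    ∃ F, IsLeaf Γ F := by
  obtain ⟨F, hF⟩ := h1
  refine ⟨F, hF, ?_⟩
  rcases Nat.lt_or_ge Γ.card 2 with h | h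
  · left
    have hc1 : Γ.card = 1 := by
      have := Finset.card_pos.mpr ⟨F, hF⟩; omega
    obtain ⟨a, ha⟩ := Finset.card_eq_one.mp hc1
    subst ha
    simp_all
  · right
    have hce : (Γ.erase F).card = 1 := by
      rw [Finset.card_erase_of_mem hF]; omega
    obtain ⟨B, hB⟩ := Finset.card_pos.mp (by omega : 0 < (Γ.erase F).card)
    refine ⟨B, hB, fun K hK => ?_⟩
    have : K = B := Finset.card_le_one.mp (le_of_eq hce) K hK B hB
    subst this
    exact Finset.inter_subset_left

theorem oddCycleFree_helly (Δ : Finset (Finset V)) (hΔ : IsFacetComplex Δ)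
    (hocf : OddCycleFree Δ) :
    ∀ Γ ⊆ Δ, Γ.Nonempty → (∀ F ∈ Γ, ∀ G ∈ Γ, (F ∩ G).Nonempty) →
      ∃ x, ∀ F ∈ Γ, x ∈ F := by
  intro Γ
  induction Γ using Finset.strongInduction with
  | _ Γ ih =>
    intro hΓΔ hne hpair
    by_contra hcon
    push_neg at hcon
    -- common point of every proper erase
    have herase : ∀ F ∈ Γ, ∃ x, (∀ G ∈ Γ.erase F, x ∈ G) ∧ x ∉ F := by
      intro F hF
      rcases (Γ.erase F).eq_empty_or_nonempty with he | hne'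
      · -- then Γ = {F}, pick point of F
        have hΓF : Γ = {F} := by
          apply Finset.eq_singleton_iff_unique_mem.mpr
          refine ⟨hF, fun y hy => ?_⟩
          by_contra hyF
          exact absurd (Finset.mem_erase.mpr ⟨hyF, hy⟩) (by simp [he])
        obtain ⟨x, hx⟩ := hpair F hF F hF
        obtain ⟨G, hG, hxG⟩ := hcon x
        rw [hΓF, Finset.mem_singleton] at hG
        subst hG
        exact absurd (Finset.mem_inter.mp hx).1 hxG
      · obtain ⟨x, hx⟩ := ih (Γ.erase F) (Finset.erase_ssubset hF)
          ((Finset.erase_subset F Γ).trans hΓΔ) hne'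
          (fun A hA B hB => hpair A (Finset.mem_of_mem_erase hA) B (Finset.mem_of_mem_erase hB))
        refine ⟨x, hx, fun hxF => ?_⟩
        obtain ⟨K, hK, hxK⟩ := hcon x
        by_cases hKF : K = F
        · exact hxK (hKF ▸ hxF)
        · exact hxK (hx K (Finset.mem_erase.mpr ⟨hKF, hK⟩))
    -- Γ has at least 3 elements
    have hcard : 3 ≤ Γ.card := by
      by_contra hlt
      push_neg at hlt
      obtain ⟨F, hF⟩ := hne
      obtain ⟨x, hx, hxF⟩ := herase F hF
      obtain ⟨G, hG, hGne⟩ : ∃ G ∈ Γ, G ≠ F := by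
        by_contra hall
        push_neg at hall
        obtain ⟨y, hy⟩ := hpair F hF F hF
        obtain ⟨K, hK, hyK⟩ := hcon y
        rw [hall K hK] at hyK
        exact hyK (Finset.mem_inter.mp hy).1
      obtain ⟨y, hy⟩ := hpair F hF G hG
      obtain ⟨K, hK, hyK⟩ := hcon y
      have hΓ2 : Γ = {F, G} := by
        apply (Finset.eq_of_subset_of_card_le ?_ ?_).symm
        · intro z hz
          rcases Finset.mem_insert.mp hz with h | h
          · exact h ▸ hF
          · exact (Finset.mem_singleton.mp h) ▸ hG
        · have : ({F, G} : Finset (Finset V)).card = 2 := Finset.card_pair (Ne.symm hGne)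
          omega
      rw [hΓ2] at hK
      rcases Finset.mem_insert.mp hK with h | h
      · exact hyK (h ▸ (Finset.mem_inter.mp hy).1)
      · exact hyK ((Finset.mem_singleton.mp h) ▸ (Finset.mem_inter.mp hy).2)
    -- pick three distinct facets
    have h0 : 0 < Γ.card := by omega
    obtain ⟨F, hF⟩ := Finset.card_pos.mp h0
    have h1 : 0 < (Γ.erase F).card := by rw [Finset.card_erase_of_mem hF]; omega
    obtain ⟨G, hG'⟩ := Finset.card_pos.mp h1
    have hG : G ∈ Γ := Finset.mem_of_mem_erase hG'
    have hGF : G ≠ F := (Finset.mem_erase.mp hG').1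
    have h2 : 0 < ((Γ.erase F).erase G).card := by
      rw [Finset.card_erase_of_mem hG', Finset.card_erase_of_mem hF]; omega
    obtain ⟨H, hH'⟩ := Finset.card_pos.mp h2
    have hHG : H ≠ G := (Finset.mem_erase.mp hH').1
    have hH'' := Finset.mem_of_mem_erase hH'
    have hHF : H ≠ F := (Finset.mem_erase.mp hH'').1
    have hH : H ∈ Γ := Finset.mem_of_mem_erase hH''
    obtain ⟨a, ha, haH⟩ := herase H hH
    obtain ⟨b, hb, hbF⟩ := herase F hF
    obtain ⟨c, hc, hcG⟩ := herase G hG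
    have haF : a ∈ F := ha F (Finset.mem_erase.mpr ⟨hHF.symm, hF⟩)
    have haG : a ∈ G := ha G (Finset.mem_erase.mpr ⟨hHG.symm, hG⟩)
    have hbG : b ∈ G := hb G (Finset.mem_erase.mpr ⟨hGF, hG⟩)
    have hbH : b ∈ H := hb H (Finset.mem_erase.mpr ⟨hHF, hH⟩)
    have hcF : c ∈ F := hc F (Finset.mem_erase.mpr ⟨hGF.symm, hF⟩)
    have hcH : c ∈ H := hc H (Finset.mem_erase.mpr ⟨hHG, hH⟩)
    have hScard : ({F, G, H} : Finset (Finset V)).card = 3 :=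
      Finset.card_eq_three.mpr ⟨F, G, H, hGF.symm, hHF.symm, hHG.symm, rfl⟩
    have hSD : ({F, G, H} : Finset (Finset V)) ⊆ Δ := by
      intro K hK
      simp only [Finset.mem_insert, Finset.mem_singleton] at hK
      rcases hK with rfl | rfl | rfl
      · exact hΓΔ hF
      · exact hΓΔ hG
      · exact hΓΔ hH
    refine hocf {F, G, H} hSD (by rw [hScard]; exact ⟨1, rfl⟩) ⟨⟨F, by simp⟩, ?_, ?_⟩
    · rintro ⟨L, hL, hcase⟩
      rcases hcase with h1 | ⟨J, hJ, hall⟩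
      · have : ({F, G, H} : Finset (Finset V)).card = 1 := by rw [h1]; simp
        omega
      · simp only [Finset.mem_insert, Finset.mem_singleton] at hL
        simp only [Finset.mem_erase, Finset.mem_insert, Finset.mem_singleton] at hJ
        obtain ⟨hJne, hJmem⟩ := hJ
        rcases hL with rfl | rfl | rfl
        · rcases hJmem with rfl | rfl | rfl
          · exact hJne rfl
          · exact hcG (hall H (Finset.mem_erase.mpr ⟨hHF, by simp⟩)
              (Finset.mem_inter.mpr ⟨hcH, hcF⟩))
          · exact haH (hall G (Finset.mem_erase.mpr ⟨hGF, by simp⟩)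
              (Finset.mem_inter.mpr ⟨haG, haF⟩))
        · rcases hJmem with rfl | rfl | rfl
          · exact hbF (hall H (Finset.mem_erase.mpr ⟨hHG, by simp⟩)
              (Finset.mem_inter.mpr ⟨hbH, hbG⟩))
          · exact hJne rfl
          · exact haH (hall F (Finset.mem_erase.mpr ⟨hGF.symm, by simp⟩)
              (Finset.mem_inter.mpr ⟨haF, haG⟩))
        · rcases hJmem with rfl | rfl | rfl
          · exact hbF (hall G (Finset.mem_erase.mpr ⟨hHG.symm, by simp⟩)
              (Finset.mem_inter.mpr ⟨hbG, hbH⟩))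
          · exact hcG (hall F (Finset.mem_erase.mpr ⟨hHF.symm, by simp⟩)
              (Finset.mem_inter.mpr ⟨hcF, hcH⟩))
          · exact hJne rfl
    · intro Γ' hsub hne'
      have := Finset.card_lt_card hsub
      exact small_has_leaf Γ' hne' (by omega)
end

section
/- If Δ is a facet complex whose line graph L(Δ) is a cycle graph of length ℓ > 3, then Δ is a simplicial cycle of length ℓ. -/
variable {V : Type*} [DecidableEq V] [Fintype V]

theorem lineGraph_cycle_implies_cycle (Δ : Finset (Finset V)) (hΔ : IsFacetComplex Δ)
    (ℓ : ℕ) (hl : 3 < ℓ) (iso : Nonempty (lineGraph Δ ≃g cycleGraph ℓ)) :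
    IsCycle Δ ∧ Δ.card = ℓ := by
  obtain ⟨e⟩ := iso
  haveI : NeZero ℓ := ⟨by omega⟩
  set F : ZMod ℓ → Finset V := fun i => (e.symm i).1 with hFdef
  have hFmem : ∀ i, F i ∈ Δ := fun i => (e.symm i).2
  have hFinj : Function.Injective F := fun i j h => e.symm.injective (Subtype.ext h)
  have hsurj : ∀ A, (hA : A ∈ Δ) → F (e ⟨A, hA⟩) = A := by
    intro A hA
    simp only [hFdef]
    rw [e.symm_apply_apply]
  have hnz : ∀ n : ℕ, 0 < n → n < ℓ → (n : ZMod ℓ) ≠ 0 := by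
    intro n hn hnl h
    rw [ZMod.natCast_eq_zero_iff] at h
    exact absurd (Nat.le_of_dvd hn h) (by omega)
  have h1 : (1 : ZMod ℓ) ≠ 0 := by
    have := hnz 1 one_pos (by omega); simpa using this
  have h2 : (2 : ZMod ℓ) ≠ 0 := by
    have := hnz 2 (by omega) (by omega); simpa using this
  have h3 : (3 : ZMod ℓ) ≠ 0 := by
    have := hnz 3 (by omega) (by omega); simpa using this
  have hne1 : ∀ i : ZMod ℓ, i + 1 ≠ i := by
    intro i h; exact h1 (by linear_combination h)
  -- adjacency characterization
  have adj_iff : ∀ i j : ZMod ℓ, i ≠ j →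
      ((F i ∩ F j).Nonempty ↔ (j = i + 1 ∨ i = j + 1)) := by
    intro i j hij
    have h := e.symm.map_adj_iff (v := i) (w := j)
    constructor
    · intro hne
      have hadj : (lineGraph Δ).Adj (e.symm i) (e.symm j) :=
        ⟨fun hc => hij (e.symm.injective hc), hne⟩
      exact (h.mp hadj).2
    · intro hor
      exact (h.mpr ⟨hij, hor⟩).2
  have key : ∀ i j : ZMod ℓ, (F i ∩ F j).Nonempty → j = i ∨ j = i + 1 ∨ j = i - 1 := by
    intro i j hne
    by_cases hij : i = j
    · exact Or.inl hij.symm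
    · rcases (adj_iff i j hij).mp hne with h | h
      · exact Or.inr (Or.inl h)
      · exact Or.inr (Or.inr (by linear_combination -h))
  have hadj : ∀ i : ZMod ℓ, (F i ∩ F (i + 1)).Nonempty := fun i =>
    (adj_iff i (i + 1) (fun h => (hne1 i) h.symm)).mpr (Or.inl rfl)
  have hcard : Δ.card = ℓ := by
    have := Fintype.card_congr e.toEquiv
    rwa [Fintype.card_coe, ZMod.card] at this
  refine ⟨⟨?_, ?_, ?_⟩, hcard⟩
  · rw [← Finset.card_pos, hcard]; omega
  · -- no leaf
    rintro ⟨A, hA, hcase⟩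
    set i := e ⟨A, hA⟩ with hidef
    have hAF : F i = A := hsurj A hA
    rcases hcase with hsing | ⟨G, hG, hGall⟩
    · rw [hsing, Finset.card_singleton] at hcard; omega
    · obtain ⟨hGne, hGΔ⟩ := Finset.mem_erase.mp hG
      set j := e ⟨G, hGΔ⟩ with hjdef
      have hGF : F j = G := hsurj G hGΔ
      have hji : j ≠ i := fun h => hGne (by rw [← hGF, h, hAF])
      -- x ∈ F (i+1) ∩ F i, and x ∈ G = F j
      obtain ⟨x, hx⟩ := hadj i
      have hx1 : x ∈ F (i + 1) := (Finset.mem_inter.mp hx).2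
      have hxi : x ∈ F i := (Finset.mem_inter.mp hx).1
      have hFi1 : F (i + 1) ∈ Δ.erase A := by
        refine Finset.mem_erase.mpr ⟨?_, hFmem _⟩
        intro h; rw [← hAF] at h; exact hne1 i (hFinj h)
      have hxj : x ∈ F j := by
        rw [hGF]
        exact hGall (F (i + 1)) hFi1 (Finset.mem_inter.mpr ⟨hx1, by rwa [hAF] at hxi⟩)
      -- y ∈ F (i-1) ∩ F i, and y ∈ F j
      obtain ⟨y, hy⟩ := hadj (i - 1)
      rw [sub_add_cancel] at hy
      have hy1 : y ∈ F (i - 1) := (Finset.mem_inter.mp hy).1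
      have hyi : y ∈ F i := (Finset.mem_inter.mp hy).2
      have hFi2 : F (i - 1) ∈ Δ.erase A := by
        refine Finset.mem_erase.mpr ⟨?_, hFmem _⟩
        intro h; rw [← hAF] at h
        exact h1 (by linear_combination - (hFinj h))
      have hyj : y ∈ F j := by
        rw [hGF]
        exact hGall (F (i - 1)) hFi2 (Finset.mem_inter.mpr ⟨hy1, by rwa [hAF] at hyi⟩)
      -- from x: j ∈ {i, i+1, i-1}, j ≠ i
      rcases key i j ⟨x, Finset.mem_inter.mpr ⟨hxi, hxj⟩⟩ with h | h | h
      · exact hji h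
      · -- j = i+1 : use y ∈ F (i-1) ∩ F j
        rcases key (i - 1) j ⟨y, Finset.mem_inter.mpr ⟨hy1, hyj⟩⟩ with h' | h' | h'
        · exact h2 (by linear_combination h' - h)
        · exact h1 (by linear_combination h' - h)
        · exact h3 (by linear_combination h' - h)
      · -- j = i-1 : use x ∈ F (i+1) ∩ F j
        rcases key (i + 1) j ⟨x, Finset.mem_inter.mpr ⟨hx1, hxj⟩⟩ with h' | h' | h'
        · exact h2 (by linear_combination h - h')
        · exact h3 (by linear_combination h - h')
        · exact h1 (by linear_combination h - h')
  · -- every proper nonempty subset has a leaf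
    intro Γ hΓ hne
    obtain ⟨A, hA⟩ := hne
    have hAΔ : A ∈ Δ := hΓ.subset hA
    obtain ⟨B, hBΔ, hBΓ⟩ := Finset.exists_of_ssubset hΓ
    set j0 := e ⟨B, hBΔ⟩ with hj0def
    set i0 := e ⟨A, hAΔ⟩ with hi0def
    have hP : ∃ k : ℕ, F (j0 + (k : ZMod ℓ)) ∈ Γ := by
      refine ⟨(i0 - j0).val, ?_⟩
      rw [ZMod.natCast_zmod_val]
      have : j0 + (i0 - j0) = i0 := by ring
      rw [this, hsurj A hAΔ]
      exact hA
    set k := Nat.find hP with hkdef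
    have hk : F (j0 + (k : ZMod ℓ)) ∈ Γ := Nat.find_spec hP
    have hkpos : 0 < k := by
      rcases Nat.eq_zero_or_pos k with h | h
      · exfalso
        rw [h] at hk
        simp only [Nat.cast_zero, add_zero] at hk
        rw [hsurj B hBΔ] at hk
        exact hBΓ hk
      · exact h
    set i := j0 + (k : ZMod ℓ) with hidef
    have hprev : F (i - 1) ∉ Γ := by
      have : i - 1 = j0 + ((k - 1 : ℕ) : ZMod ℓ) := by
        rw [Nat.cast_sub hkpos]
        push_cast
        ring
      rw [this]
      exact Nat.find_min hP (by omega)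
    refine ⟨F i, hk, ?_⟩
    by_cases hnb : F (i + 1) ∈ Γ
    · right
      refine ⟨F (i + 1), Finset.mem_erase.mpr ⟨fun h => hne1 i (hFinj h), hnb⟩, ?_⟩
      intro H hH x hx
      obtain ⟨hHne, hHΓ⟩ := Finset.mem_erase.mp hH
      have hHΔ : H ∈ Δ := hΓ.subset hHΓ
      set m := e ⟨H, hHΔ⟩ with hmdef
      have hHF : F m = H := hsurj H hHΔ
      have hmem : x ∈ F m ∩ F i := by
        rw [hHF]; exact hx
      rcases key i m ⟨x, by rw [Finset.inter_comm]; exact hmem⟩ with h | h | h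
      · exact absurd (by rw [← hHF, h]) hHne
      · rw [← h]
        exact (Finset.mem_inter.mp hmem).1
      · rw [← hHF, h] at hHΓ
        exact absurd hHΓ hprev
    · rcases Finset.eq_empty_or_nonempty (Γ.erase (F i)) with hemp | ⟨G, hG⟩
      · left
        rcases (Finset.erase_eq_empty_iff _ _).mp hemp with h | h
        · exact absurd (h ▸ hk) (Finset.notMem_empty _)
        · exact h
      · right
        refine ⟨G, hG, ?_⟩
        intro H hH x hx
        exfalso
        obtain ⟨hHne, hHΓ⟩ := Finset.mem_erase.mp hH
        have hHΔ : H ∈ Δ := hΓ.subset hHΓ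
        set m := e ⟨H, hHΔ⟩ with hmdef
        have hHF : F m = H := hsurj H hHΔ
        have hmem : x ∈ F m ∩ F i := by rw [hHF]; exact hx
        rcases key i m ⟨x, by rw [Finset.inter_comm]; exact hmem⟩ with h | h | h
        · exact hHne (by rw [← hHF, h])
        · rw [← hHF, h] at hHΓ; exact hnb hHΓ
        · rw [← hHF, h] at hHΓ; exact hprev hHΓ
end

section
/- Every simplicial cycle of length ℓ gives rise to a special hyper-cycle of the same length: if F₁ ∼ F₂ ∼ ⋯ ∼ F_ℓ ∼ F₁ is a simplicial cycle with ∩ᵢ Fᵢ = ∅ and ℓ ≥ 3, then there exist distinct vertices x₁, …, x_ℓ with xᵢ ∈ Fⱼ if and only if j ≡ i−1 or i (mod ℓ). -/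
variable {V : Type*} [DecidableEq V] [Fintype V]

theorem cycle_gives_special_hypercycle (ℓ : ℕ) [NeZero ℓ] (hl : 3 ≤ ℓ)
    (F : ZMod ℓ → Finset V) (hinj : Function.Injective F)
    (Δ : Finset (Finset V)) (hΔ : Δ = Finset.image F Finset.univ)
    (hfc : IsFacetComplex Δ)
    (hsn : ∀ i, StrongNeighbor Δ (F i) (F (i + 1)))
    (hstruct : ∀ i j : ZMod ℓ, j ≠ i - 1 → j ≠ i → j ≠ i + 1 →
      F i ∩ F j = Finset.univ.inf F)
    (htot : Finset.univ.inf F = ∅) :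
    ∃ x : ZMod ℓ → V, Function.Injective x ∧
      ∀ i j, x i ∈ F j ↔ (j = i - 1 ∨ j = i) := by
  -- small casts are nonzero in ZMod ℓ
  have hcast : ∀ k : ℕ, 0 < k → k < 3 → (k : ZMod ℓ) ≠ 0 := by
    intro k hk hk3 h
    rw [ZMod.natCast_eq_zero_iff] at h
    have := Nat.le_of_dvd hk h
    omega
  have h1 : (1 : ZMod ℓ) ≠ 0 := by
    have := hcast 1 one_pos (by norm_num); simpa using this
  have h2 : (2 : ZMod ℓ) ≠ 0 := by
    have := hcast 2 two_pos (by norm_num); simpa using this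
  have hmemΔ : ∀ i : ZMod ℓ, F i ∈ Δ := fun i => by
    rw [hΔ]; exact Finset.mem_image_of_mem F (Finset.mem_univ _)
  -- consecutive intersections are nonempty
  have hne : ∀ i : ZMod ℓ, (F (i - 1) ∩ F i).Nonempty := by
    intro i
    by_contra h
    rw [Finset.not_nonempty_iff_eq_empty] at h
    have hsn' := hsn (i - 1)
    rw [sub_add_cancel] at hsn'
    have := hsn'.2 (F (i + 1)) (hmemΔ _) (by rw [h]; exact Finset.empty_subset _)
    rcases this with h' | h'
    · have := hinj h'
      apply h2
      have : (i + 1) - (i - 1) = 0 := by rw [this]; ring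
      calc (2 : ZMod ℓ) = (i + 1) - (i - 1) := by ring
        _ = 0 := this
    · have := hinj h'
      apply h1
      have : (i + 1) - i = 0 := by rw [this]; ring
      calc (1 : ZMod ℓ) = (i + 1) - i := by ring
        _ = 0 := this
  choose x hx using hne
  have hchar : ∀ i j, x i ∈ F j ↔ (j = i - 1 ∨ j = i) := by
    intro i j
    constructor
    · intro hxj
      by_contra hcon
      push_neg at hcon
      obtain ⟨hj1, hj2⟩ := hcon
      have hxi1 : x i ∈ F (i - 1) := (Finset.mem_inter.mp (hx i)).1
      have hxi : x i ∈ F i := (Finset.mem_inter.mp (hx i)).2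
      by_cases hji : j = i + 1
      · subst hji
        -- x i ∈ F (i-1) ∩ F i ∩ F (i+1)
        by_cases h3 : (3 : ZMod ℓ) = 0
        · -- ℓ = 3 : every facet is one of these three
          have hl3 : ℓ = 3 := by
            have := (ZMod.natCast_eq_zero_iff 3 ℓ).mp (by exact_mod_cast h3)
            have := Nat.le_of_dvd (by norm_num) this
            omega
          subst hl3
          have hall : ∀ k : ZMod 3, x i ∈ F k := by
            intro k
            have hk3 : ∀ k i : ZMod 3, k = i - 1 ∨ k = i ∨ k = i + 1 := by decide
            have := hk3 k i
            rcases this with rfl | rfl | rfl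
            · exact hxi1
            · exact hxi
            · exact hxj
          have : x i ∈ Finset.univ.inf F := by
            have : ({x i} : Finset V) ≤ Finset.univ.inf F :=
              Finset.le_inf fun k _ => Finset.singleton_subset_iff.mpr (hall k)
            exact Finset.singleton_subset_iff.mp this
          rw [htot] at this
          exact absurd this (Finset.notMem_empty _)
        · -- ℓ ≥ 4 : F (i-1) ∩ F (i+1) = ∅
          have hstr := hstruct (i - 1) (i + 1) ?_ ?_ ?_
          · have : x i ∈ F (i - 1) ∩ F (i + 1) := Finset.mem_inter.mpr ⟨hxi1, hxj⟩
            rw [hstr, htot] at this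
            exact absurd this (Finset.notMem_empty _)
          · intro h; apply h3
            have : (i + 1) - (i - 1 - 1) = 0 := by rw [h]; ring
            calc (3 : ZMod ℓ) = (i + 1) - (i - 1 - 1) := by ring
              _ = 0 := this
          · intro h; apply h2
            have : (i + 1) - (i - 1) = 0 := by rw [h]; ring
            calc (2 : ZMod ℓ) = (i + 1) - (i - 1) := by ring
              _ = 0 := this
          · intro h; apply h1
            have : (i + 1) - (i - 1 + 1) = 0 := by rw [h]; ring
            calc (1 : ZMod ℓ) = (i + 1) - (i - 1 + 1) := by ring
              _ = 0 := this
      · -- j ∉ {i-1, i, i+1} : F i ∩ F j = ∅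
        have hstr := hstruct i j hj1 hj2 hji
        have : x i ∈ F i ∩ F j := Finset.mem_inter.mpr ⟨hxi, hxj⟩
        rw [hstr, htot] at this
        exact absurd this (Finset.notMem_empty _)
    · rintro (rfl | rfl)
      · exact (Finset.mem_inter.mp (hx i)).1
      · exact (Finset.mem_inter.mp (hx _)).2
  refine ⟨x, ?_, hchar⟩
  intro i j hij
  have hji : x i ∈ F j := by
    rw [hij]; exact (hchar j j).mpr (Or.inr rfl)
  rcases (hchar i j).mp hji with h | h
  · -- j = i - 1 : but x j ∈ F (j - 1) too, so x i ∈ F (i - 2), contradiction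
    exfalso
    subst h
    have hx2 : x i ∈ F (i - 1 - 1) := by
      rw [hij]
      exact (hchar (i - 1) (i - 1 - 1)).mpr (Or.inl rfl)
    rcases (hchar i (i - 1 - 1)).mp hx2 with h' | h'
    · apply h1
      have : (i - 1 - 1) - (i - 1) = 0 := by rw [h']; ring
      calc (1 : ZMod ℓ) = -((i - 1 - 1) - (i - 1)) := by ring
        _ = 0 := by rw [this]; ring
    · apply h2
      have : (i - 1 - 1) - i = 0 := by rw [h']; ring
      calc (2 : ZMod ℓ) = -((i - 1 - 1) - i) := by ring
        _ = 0 := by rw [this]; ring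
  · exact h.symm
end

section
/- Every balanced facet complex is odd-cycle-free: if Δ contains no special hyper-cycle of odd length, then no odd-cardinality subset of Δ is a simplicial cycle. -/
variable {V : Type*} [DecidableEq V] [Fintype V]

set_option linter.unusedSectionVars false

/-- A leaf with an explicit joint. -/
def LeafJ (Γ : Finset (Finset V)) (F : Finset V) : Prop :=
  F ∈ Γ ∧ ∃ G ∈ Γ.erase F, ∀ H ∈ Γ.erase F, H ∩ F ⊆ G

/-- An exclusive neighbor: `G ∈ Γ`, `G ≠ F`, and some vertex lies in `F ∩ G` and
in no other facet of `Γ`. -/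
def ExclN (Γ : Finset (Finset V)) (F G : Finset V) : Prop :=
  G ∈ Γ ∧ G ≠ F ∧ ∃ x, x ∈ F ∧ x ∈ G ∧ ∀ H ∈ Γ, H ≠ F → H ≠ G → x ∉ H

lemma isLeaf_leafJ {Γ : Finset (Finset V)} {F : Finset V} (h : IsLeaf Γ F)
    (h2 : 2 ≤ Γ.card) : LeafJ Γ F := by
  obtain ⟨hF, h⟩ := h
  rcases h with h | h
  · exfalso; rw [h] at h2; simp at h2
  · exact ⟨hF, h⟩

lemma pair_leafJ {F G : Finset V} (hne : F ≠ G) : LeafJ {F, G} F := by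
  refine ⟨by simp, G, ?_, ?_⟩
  · exact Finset.mem_erase.2 ⟨hne.symm, by simp⟩
  · intro H hH
    rcases Finset.mem_erase.1 hH with ⟨hHF, hmem⟩
    rcases Finset.mem_insert.1 hmem with h | h
    · exact absurd h hHF
    · simp only [Finset.mem_singleton] at h
      subst h; exact Finset.inter_subset_left

lemma forest_two_leafJ (n : ℕ) :
    ∀ (Γ : Finset (Finset V)), Γ.card = n → IsForest Γ → 2 ≤ n →
      ∃ F G, F ≠ G ∧ LeafJ Γ F ∧ LeafJ Γ G := by
  induction n using Nat.strong_induction_on with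
  | _ n ih =>
    intro Γ hcard hforest h2
    rcases eq_or_lt_of_le h2 with h2' | h3
    · obtain ⟨F, G, hFG, rfl⟩ := Finset.card_eq_two.1 (by omega : Γ.card = 2)
      exact ⟨F, G, hFG, pair_leafJ hFG,
        by rw [Finset.pair_comm]; exact pair_leafJ hFG.symm⟩
    · have hne : Γ.Nonempty := Finset.card_pos.1 (by omega)
      obtain ⟨G0, hG0⟩ := hforest Γ (Finset.Subset.refl _) hne
      obtain ⟨hG0mem, K, hKmem, hK⟩ := isLeaf_leafJ hG0 (by omega)
      have hforest' : IsForest (Γ.erase G0) := fun Γ0 h0 hne0 =>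
        hforest Γ0 (h0.trans (Finset.erase_subset _ _)) hne0
      have hcard' : (Γ.erase G0).card = n - 1 := by
        rw [Finset.card_erase_of_mem hG0mem, hcard]
      obtain ⟨L₁, L₂, hL12, hL₁, hL₂⟩ := ih (n-1) (by omega) _ hcard' hforest' (by omega)
      obtain ⟨L, hLK, hL⟩ : ∃ L, L ≠ K ∧ LeafJ (Γ.erase G0) L := by
        by_cases h : L₁ = K
        · exact ⟨L₂, by rw [← h]; exact hL12.symm, hL₂⟩
        · exact ⟨L₁, h, hL₁⟩
      obtain ⟨hLmem', J, hJmem', hJ⟩ := hL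
      have hLG0 : L ≠ G0 := (Finset.mem_erase.1 hLmem').1
      have hLmem : L ∈ Γ := Finset.mem_of_mem_erase hLmem'
      have hJL : J ≠ L := (Finset.mem_erase.1 hJmem').1
      have hJΓ : J ∈ Γ := Finset.mem_of_mem_erase (Finset.mem_of_mem_erase hJmem')
      refine ⟨G0, L, fun h => hLG0 h.symm, ⟨hG0mem, K, hKmem, hK⟩,
        hLmem, J, Finset.mem_erase.2 ⟨hJL, hJΓ⟩, ?_⟩
      intro H hH
      rcases eq_or_ne H G0 with rfl | hHG0
      · have h1 : L ∩ H ⊆ K := hK L (Finset.mem_erase.2 ⟨hLG0, hLmem⟩)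
        have h2 : K ∩ L ⊆ J := hJ K (Finset.mem_erase.2 ⟨fun h => hLK h.symm,
          hKmem⟩)
        intro x hx
        have hxL : x ∈ L := (Finset.mem_inter.1 hx).2
        have hxK : x ∈ K := h1 (Finset.mem_inter.2 ⟨hxL, (Finset.mem_inter.1 hx).1⟩)
        exact h2 (Finset.mem_inter.2 ⟨hxK, hxL⟩)
      · exact hJ H (Finset.mem_erase.2 ⟨(Finset.mem_erase.1 hH).1,
          Finset.mem_erase.2 ⟨hHG0, (Finset.mem_erase.1 hH).2⟩⟩)

lemma excl_of_leafJ {Γ : Finset (Finset V)} (hnl : ¬ ∃ F, IsLeaf Γ F)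
    {F G : Finset V} (hF : F ∈ Γ) (hG : LeafJ (Γ.erase F) G) : ExclN Γ F G := by
  obtain ⟨hGmem, K, hKmem, hK⟩ := hG
  have hGF : G ≠ F := (Finset.mem_erase.1 hGmem).1
  have hGΓ : G ∈ Γ := Finset.mem_of_mem_erase hGmem
  have hKG : K ≠ G := (Finset.mem_erase.1 hKmem).1
  have hKF : K ≠ F := (Finset.mem_erase.1 (Finset.mem_of_mem_erase hKmem)).1
  have hKΓ : K ∈ Γ := Finset.mem_of_mem_erase (Finset.mem_of_mem_erase hKmem)
  have hnotjoint : ¬ ∀ H ∈ Γ.erase G, H ∩ G ⊆ K :=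
    fun hj => hnl ⟨G, hGΓ, Or.inr ⟨K, Finset.mem_erase.2 ⟨hKG, hKΓ⟩, hj⟩⟩
  push_neg at hnotjoint
  obtain ⟨H₀, hH₀mem, hH₀⟩ := hnotjoint
  have hH₀G : H₀ ≠ G := (Finset.mem_erase.1 hH₀mem).1
  have hH₀F : H₀ = F := by
    by_contra hne
    exact hH₀ (hK H₀ (Finset.mem_erase.2 ⟨hH₀G,
      Finset.mem_erase.2 ⟨hne, Finset.mem_of_mem_erase hH₀mem⟩⟩))
  subst hH₀F
  obtain ⟨x, hx, hxK⟩ := Finset.not_subset.1 hH₀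
  have hxF : x ∈ H₀ := (Finset.mem_inter.1 hx).1
  have hxG : x ∈ G := (Finset.mem_inter.1 hx).2
  refine ⟨hGΓ, hGF, x, hxF, hxG, ?_⟩
  intro H hH hHF hHG hxH
  exact hxK (hK H (Finset.mem_erase.2 ⟨hHG, Finset.mem_erase.2 ⟨hHF, hH⟩⟩)
    (Finset.mem_inter.2 ⟨hxH, hxG⟩))

lemma excl_exists {Γ : Finset (Finset V)} (hnl : ¬ ∃ F, IsLeaf Γ F)
    (hmin : ∀ Γ' ⊂ Γ, Γ'.Nonempty → ∃ F, IsLeaf Γ' F)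
    (h3 : 3 ≤ Γ.card) {F : Finset V} (hF : F ∈ Γ) :
    ∃ G₁ G₂, G₁ ≠ G₂ ∧ ExclN Γ F G₁ ∧ ExclN Γ F G₂ := by
  have hforest : IsForest (Γ.erase F) := by
    intro Γ0 h0 hne0
    refine hmin Γ0 ?_ hne0
    have hsub : Γ0 ⊆ Γ := h0.trans (Finset.erase_subset _ _)
    have hFmem : F ∉ Γ0 := fun hF0 => (Finset.mem_erase.1 (h0 hF0)).1 rfl
    exact Finset.ssubset_iff_subset_ne.2 ⟨hsub, fun h => hFmem (h ▸ hF)⟩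
  have hcard' : 2 ≤ (Γ.erase F).card := by
    rw [Finset.card_erase_of_mem hF]; omega
  obtain ⟨G₁, G₂, h12, h1, h2⟩ :=
    forest_two_leafJ (Γ.erase F).card (Γ.erase F) rfl hforest hcard'
  exact ⟨G₁, G₂, h12, excl_of_leafJ hnl hF h1, excl_of_leafJ hnl hF h2⟩

def walkFn {α : Type*} (step : α → α → α) (F0 : α) : ℕ → α × α
  | 0 => (F0, step F0 F0)
  | k+1 => ((walkFn step F0 k).2, step (walkFn step F0 k).2 (walkFn step F0 k).1)

theorem balanced_is_oddCycleFree (Δ : Finset (Finset V)) (hfc : IsFacetComplex Δ)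
    (hbal : IsBalanced Δ) : ∀ Γ ⊆ Δ, Odd Γ.card → ¬ IsCycle Γ := by
  classical
  intro Γ hΓΔ hodd hcyc
  obtain ⟨hne, hnl, hmin⟩ := hcyc
  -- Γ has at least 3 facets
  have hc1 : Γ.card ≠ 1 := by
    intro h
    obtain ⟨F, rfl⟩ := Finset.card_eq_one.1 h
    exact hnl ⟨F, by simp, Or.inl rfl⟩
  have h3 : 3 ≤ Γ.card := by
    obtain ⟨m, hm⟩ := hodd
    have h0 : 0 < Γ.card := Finset.card_pos.2 hne
    omega
  -- a non-backtracking step function in the exclusive-neighbor graph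
  have hstep : ∀ F P : Finset V, ∃ G, F ∈ Γ → (ExclN Γ F G ∧ G ≠ P) := by
    intro F P
    by_cases hF : F ∈ Γ
    · obtain ⟨G₁, G₂, hG12, h1, h2⟩ := excl_exists hnl hmin h3 hF
      by_cases hP : G₁ = P
      · exact ⟨G₂, fun _ => ⟨h2, by rw [← hP]; exact hG12.symm⟩⟩
      · exact ⟨G₁, fun _ => ⟨h1, hP⟩⟩
    · exact ⟨∅, fun h => absurd h hF⟩
  choose step hstepP using hstep
  obtain ⟨F0, hF0⟩ := hne
  set w : ℕ → Finset V := fun k => (walkFn step F0 k).1 with hwdef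
  have hw0 : w 0 = F0 := by simp only [hwdef]; simp [walkFn]
  have hw1 : w 1 = step F0 F0 := by simp only [hwdef]; simp [walkFn]
  have hwstep : ∀ k, w (k+2) = step (w (k+1)) (w k) := by
    intro k; simp only [hwdef]; simp [walkFn]
  have hinv : ∀ k, w k ∈ Γ ∧ ExclN Γ (w k) (w (k+1)) := by
    intro k
    induction k with
    | zero =>
      exact ⟨by rw [hw0]; exact hF0,
        by rw [hw0, hw1]; exact (hstepP F0 F0 hF0).1⟩
    | succ k ih =>
      exact ⟨ih.2.1, by rw [hwstep k]; exact (hstepP (w (k+1)) (w k) ih.2.1).1⟩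
  have hwne2 : ∀ k, w (k+2) ≠ w k := fun k => by
    rw [hwstep k]; exact (hstepP (w (k+1)) (w k) (hinv (k+1)).1).2
  -- pigeonhole: the walk repeats
  obtain ⟨i0, hi0, j0, hj0, hij0, hwij0⟩ :=
    Finset.exists_ne_map_eq_of_card_lt_of_maps_to
      (show Γ.card < (Finset.range (Γ.card + 1)).card by
        simpa using Nat.lt_succ_self Γ.card)
      (fun k _ => (hinv k).1)
  obtain ⟨i, j, hij, heq⟩ : ∃ i j, i < j ∧ w i = w j := by
    rcases lt_or_gt_of_ne hij0 with h | h
    · exact ⟨i0, j0, h, hwij0⟩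
    · exact ⟨j0, i0, h, hwij0.symm⟩
  have hPex : ∃ m, ∃ p, p < m ∧ w p = w m := ⟨j, i, hij, heq⟩
  have hspec := Nat.find_spec hPex
  set b := Nat.find hPex with hbdef
  obtain ⟨a, hab, hwab⟩ := hspec
  have hdist : ∀ p q, p < q → q < b → w p ≠ w q := by
    intro p q hpq hqb hpq'
    rw [hbdef] at hqb
    exact Nat.find_min hPex hqb ⟨p, hpq, hpq'⟩
  set ℓ := b - a with hldef
  have hb : a + ℓ = b := by omega
  have hl3 : 3 ≤ ℓ := by
    have h1 : b ≠ a + 1 := by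
      intro h
      have hne1 := (hinv a).2.2.1
      rw [← h] at hne1
      exact hne1 hwab.symm
    have h2 : b ≠ a + 2 := by
      intro h
      apply hwne2 a
      rw [← h]
      exact hwab.symm
    omega
  haveI : NeZero ℓ := ⟨by omega⟩
  haveI : Fact (1 < ℓ) := ⟨by omega⟩
  set S : ZMod ℓ → Finset V := fun i => w (a + i.val) with hSdef
  have hwrap : ∀ i : ZMod ℓ, w (a + (i + 1).val) = w (a + i.val + 1) := by
    intro i
    have hval : (i + 1).val = (i.val + 1) % ℓ := by
      rw [ZMod.val_add, ZMod.val_one]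
    have hvi : i.val < ℓ := ZMod.val_lt i
    rcases Nat.lt_or_ge (i.val + 1) ℓ with h | h
    · rw [hval, Nat.mod_eq_of_lt h, ← Nat.add_assoc]
    · have hv1 : i.val + 1 = ℓ := by omega
      rw [hval, hv1, Nat.mod_self]
      have hix : a + i.val + 1 = b := by omega
      rw [hix]
      simpa using hwab
  have hSedge : ∀ i : ZMod ℓ, ExclN Γ (S i) (S (i + 1)) := by
    intro i
    rw [hSdef]
    show ExclN Γ (w (a + i.val)) (w (a + (i + 1).val))
    rw [hwrap i]
    exact (hinv (a + i.val)).2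
  have hSinj : Function.Injective S := by
    intro i j h
    by_contra hne'
    have hvi : i.val < ℓ := ZMod.val_lt i
    have hvj : j.val < ℓ := ZMod.val_lt j
    have hvne : i.val ≠ j.val := fun h' => hne' (ZMod.val_injective ℓ h')
    rw [hSdef] at h
    simp only at h
    rcases Nat.lt_or_ge i.val j.val with hlt | hge
    · exact hdist (a + i.val) (a + j.val) (by omega) (by omega) h
    · exact hdist (a + j.val) (a + i.val) (by omega) (by omega) h.symm
  have h20 : (2 : ZMod ℓ) ≠ 0 := by
    intro h
    have h2 : ((2 : ℕ) : ZMod ℓ) = 0 := by exact_mod_cast h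
    have hdvd := (ZMod.natCast_eq_zero_iff 2 ℓ).1 h2
    have := Nat.le_of_dvd (by norm_num) hdvd
    omega
  have h1ne : ∀ i : ZMod ℓ, i + 1 ≠ i := fun i h =>
    one_ne_zero (α := ZMod ℓ) (by linear_combination h)
  have hm1ne : ∀ i : ZMod ℓ, i - 1 ≠ i := fun i h =>
    one_ne_zero (α := ZMod ℓ) (by linear_combination -h)
  have hpm : ∀ i : ZMod ℓ, i + 1 ≠ i - 1 := fun i h =>
    h20 (by linear_combination h)
  set C : Finset (Finset V) := Finset.image S Finset.univ with hCdef
  have hSC : ∀ i : ZMod ℓ, S i ∈ C := fun i => by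
    rw [hCdef]; exact Finset.mem_image_of_mem _ (Finset.mem_univ _)
  have hSΓ : ∀ i : ZMod ℓ, S i ∈ Γ := by
    intro i
    have : S i = w (a + i.val) := by rw [hSdef]
    rw [this]
    exact (hinv (a + i.val)).1
  have hCsub : C ⊆ Γ := by
    intro F hF
    rw [hCdef] at hF
    obtain ⟨i, -, rfl⟩ := Finset.mem_image.1 hF
    exact hSΓ i
  have hCcard : C.card = ℓ := by
    rw [hCdef, Finset.card_image_of_injective _ hSinj, Finset.card_univ, ZMod.card]
  have hCnoleaf : ¬ ∃ F, IsLeaf C F := by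
    rintro ⟨F', hF'mem, hrest⟩
    rw [hCdef] at hF'mem
    obtain ⟨i, -, rfl⟩ := Finset.mem_image.1 hF'mem
    rcases hrest with hsingle | ⟨J, hJmem, hJ⟩
    · have hC1 : C.card = 1 := by rw [hsingle]; simp
      omega
    · have hJC : J ∈ C := Finset.mem_of_mem_erase hJmem
      have hJΓ : J ∈ Γ := hCsub hJC
      have hJne : J ≠ S i := (Finset.mem_erase.1 hJmem).1
      obtain ⟨hp1, hp2, x, hx1, hx2, hx3⟩ := hSedge i
      have hmem1 : S (i + 1) ∈ C.erase (S i) :=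
        Finset.mem_erase.2 ⟨fun h => h1ne i (hSinj h), hSC _⟩
      have hxJ : x ∈ J := hJ (S (i + 1)) hmem1 (Finset.mem_inter.2 ⟨hx2, hx1⟩)
      have hJp : J = S (i + 1) := by
        by_contra hne'
        exact hx3 J hJΓ hJne hne' hxJ
      obtain ⟨hq1, hq2, y, hy1, hy2, hy3⟩ := hSedge (i - 1)
      rw [show i - 1 + 1 = i from by ring] at hq1 hq2 hy2 hy3
      have hmem2 : S (i - 1) ∈ C.erase (S i) :=
        Finset.mem_erase.2 ⟨fun h => hm1ne i (hSinj h), hSC _⟩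
      have hyJ : y ∈ J := hJ (S (i - 1)) hmem2 (Finset.mem_inter.2 ⟨hy1, hy2⟩)
      have hJm : J = S (i - 1) := by
        by_contra hne'
        exact hy3 J hJΓ hne' hJne hyJ
      exact hpm i (hSinj (hJp.symm.trans hJm))
  have hCeq : C = Γ := by
    by_contra hne'
    have hss : C ⊂ Γ := Finset.ssubset_iff_subset_ne.2 ⟨hCsub, hne'⟩
    have hCne : C.Nonempty := Finset.card_pos.1 (by omega)
    exact hCnoleaf (hmin C hss hCne)
  have hlcard : ℓ = Γ.card := by rw [← hCcard, hCeq]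
  -- build the special hyper-cycle of length ℓ
  refine hbal ℓ hl3 (by rw [hlcard]; exact hodd) ?_
  have hyex : ∀ i : ZMod ℓ, ∃ x, x ∈ S i ∧ x ∈ S (i + 1) ∧
      ∀ H ∈ Γ, H ≠ S i → H ≠ S (i + 1) → x ∉ H := fun i => (hSedge i).2.2
  choose y hy using hyex
  have hy2 : ∀ i : ZMod ℓ, y (i - 1) ∈ S (i - 1) ∧ y (i - 1) ∈ S i ∧
      ∀ H ∈ Γ, H ≠ S (i - 1) → H ≠ S i → y (i - 1) ∉ H := by
    intro i
    have := hy (i - 1)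
    rwa [show i - 1 + 1 = i from by ring] at this
  have hyinj : ∀ u v : ZMod ℓ, y u = y v → u = v := by
    intro u v h
    by_contra hne'
    have h1 : S u = S v ∨ S u = S (v + 1) := by
      by_contra hc
      push_neg at hc
      exact (hy v).2.2 (S u) (hSΓ u) hc.1 hc.2 (by rw [← h]; exact (hy u).1)
    have h2 : S v = S u ∨ S v = S (u + 1) := by
      by_contra hc
      push_neg at hc
      exact (hy u).2.2 (S v) (hSΓ v) hc.1 hc.2 (by rw [h]; exact (hy v).1)
    rcases h1 with h1 | h1
    · exact hne' (hSinj h1)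
    rcases h2 with h2 | h2
    · exact hne' (hSinj h2).symm
    have hu : u = v + 1 := hSinj h1
    have hv : v = u + 1 := hSinj h2
    exact h20 (by linear_combination - hu - hv)
  refine ⟨fun i => y (i - 1), S, ?_, hSinj, fun i => hΓΔ (hSΓ i), ?_⟩
  · intro i j h
    simp only at h
    have := hyinj _ _ h
    linear_combination this
  · intro i j
    constructor
    · intro hxj
      by_contra hc
      push_neg at hc
      obtain ⟨hc1, hc2⟩ := hc
      exact (hy2 i).2.2 (S j) (hSΓ j) (fun h => hc1 (hSinj h))
        (fun h => hc2 (hSinj h)) hxj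
    · rintro (rfl | rfl)
      · exact (hy2 i).1
      · exact (hy2 j).2.1
end
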